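/- For α ∈ ℤ² \ A·ℕ^{m+2}, the Laurent polynomial Ψ^A_d(α;x) := Σ_{r≥1} (−1)^r (r−1)! Φ^B(α+r(1,d); x')/x_d^r satisfies D_u(Ψ^A_d(α;x)) = Ψ^A_d(α − A·u; x) for every u ∈ ℕ^{m+2}. -/

import Mathlib

open Finset

noncomputable section

/-- Coefficient function of a formal Laurent series/polynomial in the
`m+2` variables `x_0, x_{k_1}, …, x_{k_m}, x_d`. -/
abbrev CoeffFun (r : ℕ) := (Fin r → ℤ) → ℂ

/-- The mixed partial derivative `D_u f` on coefficient functions. -/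
def Dop {r : ℕ} (u : Fin r → ℕ) (f : CoeffFun r) : CoeffFun r :=
  fun w => (∏ j, ∏ t ∈ Finset.range (u j), ((w j : ℂ) + t + 1)) *
    f (fun j => w j + u j)

/-- The Laurent polynomial
`Ψ^A_d(α;x) = ∑_{r ≥ 1} (−1)^r (r−1)! Φ^B(α + r(1,d); x')/x_d^r`,
given by its coefficient function: the coefficient of
`x'^{u'} x_d^{-r}` (`u' ∈ ℕ^{m+1}`, `r ≥ 1`, `B·u' = α + r(1,d)`) is
`(−1)^r (r−1)!/u'!`.  Here `B` consists of the first `m+1` columns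
`(1,k_j)`, `j = 0,…,m`, of `A` and `d = k_{m+1}`. -/
def PsiD (m : ℕ) (k : Fin (m + 2) → ℕ) (α1 α2 : ℤ) : CoeffFun (m + 2) :=
  fun w =>
    let r : ℤ := -(w (Fin.last (m + 1)))
    if 1 ≤ r ∧ (∀ j : Fin (m + 1), 0 ≤ w j.castSucc) ∧
        (∑ j : Fin (m + 1), w j.castSucc) = α1 + r ∧
        (∑ j : Fin (m + 1), (k j.castSucc : ℤ) * w j.castSucc)
          = α2 + r * (k (Fin.last (m + 1)) : ℤ) then
      (-1) ^ r.toNat * ((r.toNat - 1).factorial : ℂ) *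
        (∏ j : Fin (m + 1), ((w j.castSucc).toNat.factorial : ℂ))⁻¹
    else 0

lemma fact_prod_aux (n u : ℕ) :
    (n.factorial : ℂ) * ∏ t ∈ Finset.range u, ((n : ℂ) + t + 1) = ((n + u).factorial : ℂ) := by
  induction u with
  | zero => simp
  | succ v ih =>
    rw [Finset.prod_range_succ, ← mul_assoc, ih, ← Nat.add_assoc, Nat.factorial_succ]
    push_cast
    ring

lemma neg_prod_aux (u : ℕ) : ∀ s : ℕ,
    (s.factorial : ℂ) * ∏ t ∈ Finset.range u, (-((u + s + 1 : ℕ) : ℂ) + t + 1) =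
      (-1 : ℂ) ^ u * ((u + s).factorial : ℂ) := by
  induction u with
  | zero => intro s; simp
  | succ v ih =>
    intro s
    have h := ih (s + 1)
    have e3 : v + (s + 1) + 1 = v + 1 + s + 1 := by omega
    have e2 : v + (s + 1) = v + s + 1 := by omega
    rw [e3, e2, Nat.factorial_succ] at h
    rw [Finset.prod_range_succ]
    set P : ℂ := ∏ t ∈ Finset.range v, (-((v + 1 + s + 1 : ℕ) : ℂ) + t + 1) with hP
    have hlast : (-((v + 1 + s + 1 : ℕ) : ℂ) + (v : ℂ) + 1) = -((s : ℂ) + 1) := by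
      push_cast; ring
    rw [hlast]
    have e1 : (((v + 1 + s).factorial : ℕ) : ℂ) = (((v + s + 1).factorial : ℕ) : ℂ) := by
      norm_num [show v + 1 + s = v + s + 1 from by omega]
    rw [e1, pow_succ]
    push_cast at h ⊢
    linear_combination (-1 : ℂ) * h

/-- for `α ∈ ℤ² \ A·ℕ^{m+2}`, the Laurent polynomial
`Ψ^A_d(α;x)` satisfies `D_u(Ψ^A_d(α;x)) = Ψ^A_d(α − A·u; x)` for every
`u ∈ ℕ^{m+2}`. -/
theorem PsiD_derivative
    (m : ℕ) (k : Fin (m + 2) → ℕ)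
    (hmono : StrictMono k) (h0 : k 0 = 0)
    (hgcd : Finset.univ.gcd k = 1)
    (α1 α2 : ℤ)
    (hα : ¬∃ u : Fin (m + 2) → ℕ,
      (∑ j, (u j : ℤ)) = α1 ∧ (∑ j, (k j : ℤ) * u j) = α2)
    (u : Fin (m + 2) → ℕ) :
    Dop u (PsiD m k α1 α2) =
      PsiD m k (α1 - ∑ j, (u j : ℤ)) (α2 - ∑ j, (k j : ℤ) * u j) := by
  funext w
  simp only [Dop, PsiD]
  set L : Fin (m + 2) := Fin.last (m + 1) with hLdef
  have hUS : (∑ j : Fin (m + 2), (u j : ℤ))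
      = (∑ j : Fin (m + 1), (u j.castSucc : ℤ)) + (u L : ℤ) := by
    rw [Fin.sum_univ_castSucc]
  have hUK : (∑ j : Fin (m + 2), (k j : ℤ) * u j)
      = (∑ j : Fin (m + 1), (k j.castSucc : ℤ) * u j.castSucc) + (k L : ℤ) * u L := by
    rw [Fin.sum_univ_castSucc]
  have e1 : (∑ x : Fin (m + 1), (w x.castSucc + (u x.castSucc : ℤ)))
      = (∑ x : Fin (m + 1), w x.castSucc) + (∑ x : Fin (m + 1), (u x.castSucc : ℤ)) :=
    Finset.sum_add_distrib
  have e2 : (∑ x : Fin (m + 1), (k x.castSucc : ℤ) * (w x.castSucc + (u x.castSucc : ℤ)))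
      = (∑ x : Fin (m + 1), (k x.castSucc : ℤ) * w x.castSucc)
        + (∑ x : Fin (m + 1), (k x.castSucc : ℤ) * u x.castSucc) := by
    rw [← Finset.sum_add_distrib]
    exact Finset.sum_congr rfl (fun x _ => mul_add _ _ _)
  split_ifs with h1 h2 h3
  · -- both conditions hold : value equality
    obtain ⟨g1, g2, g3, g4⟩ := h1
    obtain ⟨hr1, hnn, hs1, hs2⟩ := h2
    set n : Fin (m + 1) → ℕ := fun j => (w j.castSucc).toNat with hn
    set s : ℕ := (-(w L + (u L : ℤ))).toNat - 1 with hs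
    have ht1 : (-(w L + (u L : ℤ))).toNat = s + 1 := by omega
    have ht2 : (-(w L)).toNat = u L + s + 1 := by omega
    have ht3 : ∀ j : Fin (m + 1), (w j.castSucc + (u j.castSucc : ℤ)).toNat
        = n j + u j.castSucc := by intro j; have := hnn j; simp only [hn]; omega
    have hwcast : ∀ j : Fin (m + 1), ((w j.castSucc : ℤ) : ℂ) = ((n j : ℕ) : ℂ) := by
      intro j
      have : w j.castSucc = ((n j : ℕ) : ℤ) := by have := hnn j; simp only [hn]; omega
      rw [this]; push_cast; ring
    have hwL : ((w L : ℤ) : ℂ) = -(((u L + s + 1 : ℕ)) : ℂ) := by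
      have : w L = -(((u L + s + 1 : ℕ)) : ℤ) := by omega
      rw [this]; push_cast; ring
    rw [ht1, ht2]
    simp only [Nat.add_sub_cancel, ht3]
    rw [Fin.prod_univ_castSucc]
    -- rewrite inner products
    have hXnz : ∀ j : Fin (m + 1), ((n j + u j.castSucc).factorial : ℂ) ≠ 0 :=
      fun j => Nat.cast_ne_zero.2 (Nat.factorial_ne_zero _)
    have hYnz : ∀ j : Fin (m + 1), ((n j).factorial : ℂ) ≠ 0 :=
      fun j => Nat.cast_ne_zero.2 (Nat.factorial_ne_zero _)
    have hsnz : ((s.factorial : ℕ) : ℂ) ≠ 0 := Nat.cast_ne_zero.2 (Nat.factorial_ne_zero _)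
    have hBj : ∀ j : Fin (m + 1),
        (∏ t ∈ Finset.range (u j.castSucc), ((w j.castSucc : ℂ) + t + 1))
          = ((n j + u j.castSucc).factorial : ℂ) * (((n j).factorial : ℂ))⁻¹ := by
      intro j
      have h := fact_prod_aux (n j) (u j.castSucc)
      rw [hwcast j, ← div_eq_mul_inv, eq_div_iff (hYnz j), mul_comm]
      exact h
    have hBL : (∏ t ∈ Finset.range (u L), ((w L : ℂ) + t + 1))
        = (-1 : ℂ) ^ (u L) * ((u L + s).factorial : ℂ) * ((s.factorial : ℂ))⁻¹ := by
      have h := neg_prod_aux (u L) s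
      have hpc : (∏ t ∈ Finset.range (u L), ((w L : ℂ) + t + 1))
          = ∏ t ∈ Finset.range (u L), (-((u L + s + 1 : ℕ) : ℂ) + t + 1) :=
        Finset.prod_congr rfl (fun t _ => by rw [hwL])
      rw [hpc, ← div_eq_mul_inv, eq_div_iff hsnz, mul_comm]
      exact h
    have hprodcast : (∏ j : Fin (m + 1),
        ∏ t ∈ Finset.range (u j.castSucc), ((w j.castSucc : ℂ) + t + 1))
        = (∏ j : Fin (m + 1), ((n j + u j.castSucc).factorial : ℂ))
          * (∏ j : Fin (m + 1), (((n j).factorial : ℂ)))⁻¹ := by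
      rw [← Finset.prod_inv_distrib, ← Finset.prod_mul_distrib]
      exact Finset.prod_congr rfl (fun j _ => hBj j)
    rw [hprodcast, hBL]
    have hPXnz : (∏ j : Fin (m + 1), ((n j + u j.castSucc).factorial : ℂ)) ≠ 0 :=
      Finset.prod_ne_zero_iff.2 (fun j _ => hXnz j)
    have hPYnz : (∏ j : Fin (m + 1), (((n j).factorial : ℂ))) ≠ 0 :=
      Finset.prod_ne_zero_iff.2 (fun j _ => hYnz j)
    field_simp
    rw [show (∏ j : Fin (m + 1), ((w j.castSucc).toNat.factorial : ℂ))
        = ∏ j : Fin (m + 1), (((n j).factorial : ℂ)) from rfl]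
    rw [eq_div_iff hPYnz]
    ring
  · -- h1 holds, h2 fails : prefactor vanishes
    obtain ⟨g1, g2, g3, g4⟩ := h1
    have hex : ∃ j : Fin (m + 1), w j.castSucc < 0 := by
      by_contra hc
      push_neg at hc
      refine h2 ⟨by omega, hc, by linarith [g3, e1, hUS], ?_⟩
      have hx : -(w L + (u L : ℤ)) * (k L : ℤ)
          = -(w L) * (k L : ℤ) - (k L : ℤ) * (u L : ℤ) := by ring
      linarith [g4, e2, hUK, hx]
    obtain ⟨j0, hj0⟩ := hex
    have hnn0 := g2 j0
    apply mul_eq_zero_of_left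
    apply Finset.prod_eq_zero (Finset.mem_univ j0.castSucc)
    have ht : ((-(w j0.castSucc) - 1).toNat) < u j0.castSucc := by omega
    apply Finset.prod_eq_zero (Finset.mem_range.2 ht)
    have : ((w j0.castSucc : ℂ)) + ((-(w j0.castSucc) - 1).toNat : ℂ) + 1
        = (((w j0.castSucc + ((-(w j0.castSucc) - 1).toNat : ℤ) + 1 : ℤ)) : ℂ) := by
      push_cast; ring
    rw [this]
    have hz : w j0.castSucc + ((-(w j0.castSucc) - 1).toNat : ℤ) + 1 = 0 := by omega
    rw [hz]; norm_num
  · -- h1 fails, h3 holds : contradiction with hα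
    exfalso
    obtain ⟨hr1, hnn, hs1, hs2⟩ := h3
    have hfail : ¬ (1 ≤ -(w L + (u L : ℤ))) := by
      intro hc
      refine h1 ⟨hc, fun j => by have := hnn j; omega, by linarith [e1, hUS, hs1], ?_⟩
      have hx : -(w L + (u L : ℤ)) * (k L : ℤ)
          = -(w L) * (k L : ℤ) - (k L : ℤ) * (u L : ℤ) := by ring
      linarith [e2, hUK, hs2, hx]
    apply hα
    refine ⟨Fin.lastCases (u L - (-(w L)).toNat) (fun j => (w j.castSucc).toNat + u j.castSucc),
      ?_, ?_⟩
    · rw [Fin.sum_univ_castSucc]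
      simp only [Fin.lastCases_last, Fin.lastCases_castSucc]
      have hcast : ∀ j : Fin (m + 1),
          ((((w j.castSucc).toNat + u j.castSucc : ℕ)) : ℤ) = w j.castSucc + u j.castSucc := by
        intro j; have := hnn j; omega
      rw [Finset.sum_congr rfl (fun j _ => hcast j)]
      have hlastcast : (((u L - (-(w L)).toNat : ℕ)) : ℤ) = (u L : ℤ) + w L := by omega
      rw [hlastcast, e1]
      linarith [hs1, hUS]
    · rw [Fin.sum_univ_castSucc]
      simp only [Fin.lastCases_last, Fin.lastCases_castSucc]
      have hcast : ∀ j : Fin (m + 1),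
          (k j.castSucc : ℤ) * (((w j.castSucc).toNat + u j.castSucc : ℕ) : ℤ)
            = (k j.castSucc : ℤ) * (w j.castSucc + u j.castSucc) := by
        intro j
        congr 1
        have := hnn j; omega
      rw [Finset.sum_congr rfl (fun j _ => hcast j)]
      have hlastcast : (((u L - (-(w L)).toNat : ℕ)) : ℤ) = (u L : ℤ) + w L := by omega
      rw [hlastcast, e2]
      have hx : (k L : ℤ) * ((u L : ℤ) + w L) = (k L : ℤ) * u L + (k L : ℤ) * w L := by ring
      have hy : -(w L) * (k L : ℤ) = -((k L : ℤ) * w L) := by ring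
      linarith [hs2, hUK, hx, hy]
  · exact mul_zero _
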